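/- Let m, p, n be integers with m ≤ -3, p ≥ 3 and n ≠ 0. Then mn + 1 ≠ 0, the rational numbers -n/(mn+1), (p+1)/(2p) and (p-2m-1)/(2p-4m) all lie strictly between 0 and 1, the sum (p+1)/(2p) + (p-2m-1)/(2p-4m) is greater than 1, and the triple (-n/(mn+1), (p+1)/(2p), (p-2m-1)/(2p-4m)) is not realizable. (This is the case m ≤ -3, n ≠ 0 of the statement that K_{m,p,n}(m_{p,n}) = S²(-1, -n/(mn+1), (p+1)/2p, (p-2m-1)/(2p-4m)) is an L-space.) -/

import Mathlib

/-- A triple of rationals is *realizable* if there exist relatively prime positive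
integers `a`, `k` with `0 < a ≤ k/2` such that the increasing rearrangement
`(t₁, t₂, t₃)` of `(s₁, s₂, s₃)` satisfies `t₁ < 1/k`, `t₂ < a/k`, `t₃ < (k-a)/k`. -/
def Realizable (s₁ s₂ s₃ : ℚ) : Prop :=
  ∃ a k : ℕ, 0 < a ∧ 2 * a ≤ k ∧ Nat.Coprime a k ∧
    ∃ t₁ t₂ t₃ : ℚ, ({t₁, t₂, t₃} : Multiset ℚ) = ({s₁, s₂, s₃} : Multiset ℚ) ∧
      t₁ ≤ t₂ ∧ t₂ ≤ t₃ ∧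
      t₁ < 1 / (k : ℚ) ∧ t₂ < (a : ℚ) / k ∧ t₃ < ((k : ℚ) - (a : ℚ)) / k

/-- If two of the three rationals sum to more than 1, the triple is not realizable. -/
lemma not_realizable_of_one_lt_add (s₁ s₂ s₃ : ℚ) (h : 1 < s₂ + s₃) :
    ¬ Realizable s₁ s₂ s₃ := by
  rintro ⟨a, k, ha, hak, -, t₁, t₂, t₃, hmul, h12, h23, ht1, ht2, ht3⟩
  have hk0 : 0 < k := by omega
  have hkQ : (0 : ℚ) < (k : ℚ) := by exact_mod_cast hk0
  have hsum3 : t₁ + (t₂ + t₃) = s₁ + (s₂ + s₃) := by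
    have := congrArg Multiset.sum hmul
    simpa using this
  have hs1mem : s₁ ∈ ({t₁, t₂, t₃} : Multiset ℚ) := by
    rw [hmul]; simp
  have ht1s1 : t₁ ≤ s₁ := by
    simp only [Multiset.insert_eq_cons, Multiset.mem_cons, Multiset.mem_singleton] at hs1mem
    rcases hs1mem with h' | h' | h' <;> linarith
  have hlt1 : t₂ + t₃ < 1 := by
    have : (a : ℚ) / k + ((k : ℚ) - a) / k = 1 := by
      field_simp
      ring
    linarith
  linarith

/-- The case `m ≤ -3`, `n ≠ 0` of the statement that
`K_{m,p,n}(m_{p,n}) = S²(-1, -n/(mn+1), (p+1)/2p, (p-2m-1)/(2p-4m))` is an L-space. -/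
theorem Kmpn_lspace (m p n : ℤ) (hm : m ≤ -3) (hp : 3 ≤ p) (hn : n ≠ 0) :
    m * n + 1 ≠ 0 ∧
    (0 < -(n : ℚ) / ((m : ℚ) * n + 1) ∧ -(n : ℚ) / ((m : ℚ) * n + 1) < 1) ∧
    (0 < ((p : ℚ) + 1) / (2 * p) ∧ ((p : ℚ) + 1) / (2 * p) < 1) ∧
    (0 < ((p : ℚ) - 2 * m - 1) / (2 * p - 4 * m) ∧
      ((p : ℚ) - 2 * m - 1) / (2 * p - 4 * m) < 1) ∧
    1 < ((p : ℚ) + 1) / (2 * p) + ((p : ℚ) - 2 * m - 1) / (2 * p - 4 * m) ∧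
    ¬ Realizable (-(n : ℚ) / ((m : ℚ) * n + 1)) (((p : ℚ) + 1) / (2 * p))
      (((p : ℚ) - 2 * m - 1) / (2 * p - 4 * m)) := by
  have hm3 : (m : ℚ) ≤ -3 := by exact_mod_cast hm
  have hp3 : (3 : ℚ) ≤ (p : ℚ) := by exact_mod_cast hp
  have hp0 : (0 : ℚ) < 2 * p := by linarith
  have hd0 : (0 : ℚ) < 2 * p - 4 * m := by linarith
  have hncase : n ≤ -1 ∨ 1 ≤ n := by omega
  have hnQ : (n : ℚ) ≤ -1 ∨ 1 ≤ (n : ℚ) := by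
    rcases hncase with h | h
    · left; exact_mod_cast h
    · right; exact_mod_cast h
  have hfrac1 : 0 < -(n : ℚ) / ((m : ℚ) * n + 1) ∧ -(n : ℚ) / ((m : ℚ) * n + 1) < 1 := by
    rcases hnQ with h | h
    · have hD : (0 : ℚ) < (m : ℚ) * n + 1 := by nlinarith
      constructor
      · exact div_pos (by linarith) hD
      · rw [div_lt_one hD]; nlinarith
    · have hD : (0 : ℚ) < -((m : ℚ) * n + 1) := by nlinarith
      have hrw : -(n : ℚ) / ((m : ℚ) * n + 1) = (n : ℚ) / (-((m : ℚ) * n + 1)) := by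
        rw [div_neg, neg_div]
      rw [hrw]
      constructor
      · exact div_pos (by linarith) hD
      · rw [div_lt_one hD]; nlinarith
  have hmn : m * n + 1 ≠ 0 := by
    intro h
    have : ((m * n + 1 : ℤ) : ℚ) = 0 := by exact_mod_cast h
    push_cast at this
    rcases hnQ with hcase | hcase <;> nlinarith
  have hfrac2 : 0 < ((p : ℚ) + 1) / (2 * p) ∧ ((p : ℚ) + 1) / (2 * p) < 1 := by
    constructor
    · exact div_pos (by linarith) hp0
    · rw [div_lt_one hp0]; linarith
  have hfrac3 : 0 < ((p : ℚ) - 2 * m - 1) / (2 * p - 4 * m) ∧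
      ((p : ℚ) - 2 * m - 1) / (2 * p - 4 * m) < 1 := by
    constructor
    · exact div_pos (by linarith) hd0
    · rw [div_lt_one hd0]; linarith
  have hsum : 1 < ((p : ℚ) + 1) / (2 * p) + ((p : ℚ) - 2 * m - 1) / (2 * p - 4 * m) := by
    rw [div_add_div _ _ (ne_of_gt hp0) (ne_of_gt hd0), lt_div_iff₀ (by positivity)]
    nlinarith
  exact ⟨hmn, hfrac1, hfrac2, hfrac3, hsum, not_realizable_of_one_lt_add _ _ _ hsum⟩
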